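/- arXiv:1501.07066 — 2 statements merged into one kernel-verified Lean document; each statement's English description precedes it below -/
import Mathlib

section
/- Let K be a field and A a finite-dimensional K-algebra. A cochain map p : X → Y of cochain complexes of A-modules indexed by ℤ has the right lifting property with respect to the inclusion ι_n : S^{n+1} → D^n for every n ∈ ℤ if and only if p is a quasi-isomorphism and p is surjective in every degree. -/
open CategoryTheory CategoryTheory.Limits

variable (A : Type) [Ring A]

/-- The cochain complex `S^n`, with `A` in degree `n`, `0` in all other degrees,
and all differentials equal to zero. -/
noncomputable def Scx (n : ℤ) : CochainComplex (ModuleCat A) ℤ where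
  X k := if k = n then ModuleCat.of A A else ModuleCat.of A PUnit
  d _ _ := 0
  shape _ _ _ := rfl
  d_comp_d' _ _ _ _ _ := by simp

/-- The cochain complex `D^n`, with `A` in degrees `n` and `n + 1`, `0` elsewhere,
whose only nonzero differential is the identity `A → A` from degree `n` to `n + 1`. -/
noncomputable def Dcx (n : ℤ) : CochainComplex (ModuleCat A) ℤ where
  X k := if k = n ∨ k = n + 1 then ModuleCat.of A A else ModuleCat.of A PUnit
  d i j :=
    if h : i = n ∧ j = n + 1 then
      eqToHom (by rw [if_pos (Or.inl h.1), if_pos (Or.inr h.2)])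
    else 0
  shape i j hij := dif_neg (fun h => hij (by rw [ComplexShape.up_Rel, h.1, h.2]))
  d_comp_d' i j k _ _ := by
    by_cases h2 : j = n ∧ k = n + 1
    · rw [dif_neg (fun h1 : i = n ∧ j = n + 1 => by omega)]
      simp
    · rw [dif_neg h2, comp_zero]

/-- The cochain map `ι_n : S^{n+1} → D^n`, the identity in degree `n + 1`
and zero elsewhere. -/
noncomputable def iotaMap (n : ℤ) : Scx A (n + 1) ⟶ Dcx A n where
  f k :=
    if h : k = n + 1 then
      eqToHom (by dsimp only [Scx, Dcx]; rw [if_pos h, if_pos (Or.inr h)])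
    else 0
  comm' i j hij := by
    dsimp only [Scx, Dcx]
    rw [zero_comp]
    by_cases h : i = n ∧ j = n + 1
    · simp [show ¬ i = n + 1 by omega]; exact zero_comp
    · rw [dif_neg h, comp_zero]

section Aux

variable (A : Type) [Ring A]

/-- Elementwise characterization of `IsIso (homologyMap φ)` for short complexes of modules. -/
lemma isIso_homologyMap_iff_mc {S₁ S₂ : ShortComplex (ModuleCat A)} (φ : S₁ ⟶ S₂) :
    IsIso (ShortComplex.homologyMap φ) ↔
      ((∀ x : S₁.X₂, S₁.g x = 0 → (∃ t, φ.τ₂ x = S₂.f t) → ∃ w, S₁.f w = x) ∧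
       (∀ y : S₂.X₂, S₂.g y = 0 → ∃ x t, S₁.g x = 0 ∧ φ.τ₂ x = y + S₂.f t)) := by
  have hc23 : ∀ x : S₁.X₂, S₂.g (φ.τ₂ x) = φ.τ₃ (S₁.g x) := by
    intro x
    have := ConcreteCategory.congr_hom φ.comm₂₃ x
    simpa only [ConcreteCategory.comp_apply] using this
  have hc12 : ∀ x : S₁.X₁, S₂.f (φ.τ₁ x) = φ.τ₂ (S₁.f x) := by
    intro x
    have := ConcreteCategory.congr_hom φ.comm₁₂ x
    simpa only [ConcreteCategory.comp_apply] using this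
  have hmem : ∀ x ∈ LinearMap.ker S₁.g.hom, φ.τ₂ x ∈ LinearMap.ker S₂.g.hom := by
    intro x hx
    simp only [LinearMap.mem_ker] at hx ⊢
    rw [hc23, hx, map_zero]
  set φK : (LinearMap.ker S₁.g.hom) →ₗ[A] (LinearMap.ker S₂.g.hom) :=
    φ.τ₂.hom.restrict hmem with hφK
  have hφKval : ∀ k : LinearMap.ker S₁.g.hom, (φK k : S₂.X₂) = φ.τ₂ (k : S₁.X₂) := fun _ => rfl
  have hle : LinearMap.range S₁.moduleCatToCycles ≤
      Submodule.comap φK (LinearMap.range S₂.moduleCatToCycles) := by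
    rintro _ ⟨t, rfl⟩
    refine ⟨φ.τ₁ t, Subtype.ext ?_⟩
    show S₂.f (φ.τ₁ t) = _
    rw [hc12]
    rfl
  set φH := Submodule.mapQ _ _ φK hle with hφH
  let γ : ShortComplex.LeftHomologyMapData φ S₁.moduleCatLeftHomologyData
      S₂.moduleCatLeftHomologyData :=
    { φK := ModuleCat.ofHom φK
      φH := ModuleCat.ofHom φH
      commi := by apply ModuleCat.hom_ext; apply LinearMap.ext; intro x; rfl
      commf' := by
        apply ModuleCat.hom_ext; apply LinearMap.ext; intro x
        apply Subtype.ext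
        show φ.τ₂ (S₁.f x) = S₂.f (φ.τ₁ x)
        rw [hc12]
      commπ := by
        apply ModuleCat.hom_ext; apply LinearMap.ext; intro x
        show φH (Submodule.Quotient.mk x) = Submodule.Quotient.mk (φK x)
        rfl }
  have heq := γ.homologyMap_eq
  have hiso : IsIso (ShortComplex.homologyMap φ) ↔ IsIso γ.φH := by
    constructor
    · intro h
      have : γ.φH = S₁.moduleCatLeftHomologyData.homologyIso.inv ≫
          ShortComplex.homologyMap φ ≫ S₂.moduleCatLeftHomologyData.homologyIso.hom := by
        rw [heq]; simp
      rw [this]; infer_instance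
    · intro h
      rw [heq]; infer_instance
  rw [hiso, ConcreteCategory.isIso_iff_bijective]
  show Function.Bijective φH ↔ _
  constructor
  · rintro ⟨hinj, hsurj⟩
    constructor
    · rintro x hx ⟨t, ht⟩
      have h0 : φH (Submodule.Quotient.mk ⟨x, hx⟩) = φH 0 := by
        rw [map_zero, hφH, Submodule.mapQ_apply, Submodule.Quotient.mk_eq_zero]
        exact ⟨t, Subtype.ext (by rw [hφKval]; exact ht.symm)⟩
      have h1 := hinj h0
      rw [Submodule.Quotient.mk_eq_zero] at h1
      obtain ⟨w, hw⟩ := h1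
      exact ⟨w, congrArg Subtype.val hw⟩
    · intro y hy
      obtain ⟨a, ha⟩ := hsurj (Submodule.Quotient.mk ⟨y, hy⟩)
      obtain ⟨⟨x, hx⟩, rfl⟩ := Submodule.Quotient.mk_surjective _ a
      rw [hφH, Submodule.mapQ_apply, Submodule.Quotient.eq] at ha
      obtain ⟨t, ht⟩ := ha
      refine ⟨x, t, hx, ?_⟩
      have h2 := congrArg Subtype.val ht
      rw [AddSubgroupClass.coe_sub] at h2
      have h3 : S₂.f t = φ.τ₂ x - y := h2
      rw [h3]
      abel
  · rintro ⟨hinj, hsurj⟩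
    constructor
    · rw [injective_iff_map_eq_zero]
      intro a ha
      obtain ⟨⟨x, hx⟩, rfl⟩ := Submodule.Quotient.mk_surjective _ a
      rw [hφH, Submodule.mapQ_apply, Submodule.Quotient.mk_eq_zero] at ha
      obtain ⟨t, ht⟩ := ha
      have ht' : S₂.f t = φ.τ₂ x := congrArg Subtype.val ht
      obtain ⟨w, hw⟩ := hinj x hx ⟨t, ht'.symm⟩
      rw [Submodule.Quotient.mk_eq_zero]
      exact ⟨w, Subtype.ext hw⟩
    · intro b
      obtain ⟨⟨y, hy⟩, rfl⟩ := Submodule.Quotient.mk_surjective _ b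
      obtain ⟨x, t, hx, ht⟩ := hsurj y hy
      refine ⟨Submodule.Quotient.mk ⟨x, hx⟩, ?_⟩
      rw [hφH, Submodule.mapQ_apply, Submodule.Quotient.eq]
      refine ⟨t, Subtype.ext ?_⟩
      rw [AddSubgroupClass.coe_sub]
      show S₂.f t = φ.τ₂ x - y
      rw [ht]
      abel

lemma cocycle_all {T : CochainComplex (ModuleCat A) ℤ} {n : ℤ} {x : T.X n}
    (h : T.d n (n + 1) x = 0) : ∀ k, T.d n k x = 0 := by
  intro k
  by_cases hk : k = n + 1
  · subst hk; exact h
  · rw [T.shape n k (by simpa using fun h' => hk h'.symm)]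
    rfl

/-- Elementwise characterization of `QuasiIsoAt` for cochain complexes of modules. -/
lemma quasiIsoAt_iff_elem {X Y : CochainComplex (ModuleCat A) ℤ} (p : X ⟶ Y) (n : ℤ) :
    QuasiIsoAt p n ↔
      ((∀ x : X.X n, (∀ k, X.d n k x = 0) →
          (∀ j : ℤ, j = n - 1 → (∃ t, p.f n x = Y.d j n t) → ∃ w, X.d j n w = x)) ∧
       (∀ y : Y.X n, (∀ k, Y.d n k y = 0) →
          ∀ j : ℤ, j = n - 1 → ∃ x t, (∀ k, X.d n k x = 0) ∧ p.f n x = y + Y.d j n t)) := by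
  rw [quasiIsoAt_iff' p (n - 1) n (n + 1) (by simp) (by simp),
    ShortComplex.quasiIso_iff, isIso_homologyMap_iff_mc]
  constructor
  · rintro ⟨h1, h2⟩
    constructor
    · rintro x hx j rfl ⟨t, ht⟩
      exact h1 x (hx (n + 1)) ⟨t, ht⟩
    · rintro y hy j rfl
      obtain ⟨x, t, hx, ht⟩ := h2 y (hy (n + 1))
      exact ⟨x, t, cocycle_all A hx, ht⟩
  · rintro ⟨h1, h2⟩
    constructor
    · rintro x hx ⟨t, ht⟩
      exact h1 x (cocycle_all A hx) (n - 1) rfl ⟨t, ht⟩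
    · intro y hy
      obtain ⟨x, t, hx, ht⟩ := h2 y (cocycle_all A hy) (n - 1) rfl
      exact ⟨x, t, hx (n + 1), ht⟩

lemma punit_hom_ext {M N : ModuleCat A} (hM : M = ModuleCat.of A PUnit)
    (f g : M ⟶ N) : f = g := by
  subst hM
  apply ModuleCat.hom_ext
  apply LinearMap.ext
  intro x
  have hx : x = 0 := Subsingleton.elim x 0
  rw [hx, map_zero, map_zero]

/-- The element `1` of `ModuleCat.of A A`. -/
noncomputable def oneA : ↑(ModuleCat.of A A) := show A from 1

/-- The morphism `A ⟶ M` sending `1` to `x`. -/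
noncomputable def sp {M : ModuleCat A} (x : M) : ModuleCat.of A A ⟶ M :=
  ModuleCat.ofHom (LinearMap.toSpanSingleton A M x)

@[simp] lemma sp_one {M : ModuleCat A} (x : M) : sp A x (oneA A) = x :=
  LinearMap.toSpanSingleton_apply_one A M x

lemma sp_ext {M : ModuleCat A} {f g : ModuleCat.of A A ⟶ M}
    (h : f (oneA A) = g (oneA A)) : f = g := ModuleCat.hom_ext (LinearMap.ext_ring h)

lemma sp_comp {M N : ModuleCat A} (g : M ⟶ N) (x : M) : sp A x ≫ g = sp A (g x) := by
  apply sp_ext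
  show g (sp A x (oneA A)) = sp A (g x) (oneA A)
  rw [sp_one, sp_one]

lemma sp_zero {M : ModuleCat A} : sp A (0 : M) = 0 := by
  apply sp_ext
  rw [sp_one]
  rfl

lemma sp_inj {M : ModuleCat A} {x y : M} (h : sp A x = sp A y) : x = y := by
  have := ConcreteCategory.congr_hom h (oneA A)
  rw [sp_one, sp_one] at this
  exact this

lemma eq_sp {M : ModuleCat A} (f : ModuleCat.of A A ⟶ M) : f = sp A (f (oneA A)) := by
  apply sp_ext
  rw [sp_one]

end Aux

section SD

variable (A : Type) [Ring A]

lemma Scx_X_eq (m k : ℤ) :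
    (Scx A m).X k = if k = m then ModuleCat.of A A else ModuleCat.of A PUnit := rfl

lemma Dcx_X_eq (n k : ℤ) :
    (Dcx A n).X k = if k = n ∨ k = n + 1 then ModuleCat.of A A else ModuleCat.of A PUnit := rfl

lemma eqS {m k : ℤ} (h : k = m) : ModuleCat.of A A = (Scx A m).X k := by
  rw [Scx_X_eq, if_pos h]

lemma eqD {n k : ℤ} (h : k = n ∨ k = n + 1) : ModuleCat.of A A = (Dcx A n).X k := by
  rw [Dcx_X_eq, if_pos h]

lemma ScxX_punit {m k : ℤ} (h : k ≠ m) : (Scx A m).X k = ModuleCat.of A PUnit := by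
  rw [Scx_X_eq, if_neg h]

lemma DcxX_punit {n k : ℤ} (h : ¬(k = n ∨ k = n + 1)) :
    (Dcx A n).X k = ModuleCat.of A PUnit := by
  rw [Dcx_X_eq, if_neg h]

lemma Scx_d_eq (m i j : ℤ) : (Scx A m).d i j = 0 := rfl

lemma Dcx_d_eq (n i j : ℤ) :
    (Dcx A n).d i j = if h : i = n ∧ j = n + 1 then
      eqToHom ((eqD A (Or.inl h.1)).symm.trans (eqD A (Or.inr h.2))) else 0 := by
  by_cases h : i = n ∧ j = n + 1
  · show (if h : i = n ∧ j = n + 1 then _ else 0) = _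
    rfl
  · show (if h : i = n ∧ j = n + 1 then _ else 0) = _
    rfl

lemma iotaMap_f_eq (n k : ℤ) :
    (iotaMap A n).f k = if h : k = n + 1 then
      eqToHom ((eqS A h).symm.trans (eqD A (Or.inr h))) else 0 := by
  by_cases h : k = n + 1
  · show (if h : k = n + 1 then _ else 0) = _
    rw [dif_pos h]
  · show (if h : k = n + 1 then _ else 0) = _
    rw [dif_neg h]

/-- The cochain map `S^m ⟶ T` determined by a cocycle `x` in degree `m`. -/
noncomputable def Scx.desc (m : ℤ) (T : CochainComplex (ModuleCat A) ℤ)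
    (x : T.X m) (hx : ∀ k, T.d m k x = 0) : Scx A m ⟶ T where
  f k := if h : k = m then
      eqToHom (eqS A h).symm ≫ sp A x ≫ eqToHom (congrArg T.X h.symm) else 0
  comm' i j _ := by
    rw [Scx_d_eq, zero_comp]
    by_cases h : i = m
    · subst h
      rw [dif_pos rfl]
      simp only [eqToHom_refl, Category.comp_id, Category.assoc]
      rw [sp_comp, hx j, sp_zero, comp_zero]
    · rw [dif_neg h, zero_comp]

lemma Scx.desc_f (m : ℤ) (T : CochainComplex (ModuleCat A) ℤ)
    (x : T.X m) (hx : ∀ k, T.d m k x = 0) :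
    eqToHom (eqS A rfl) ≫ (Scx.desc A m T x hx).f m = sp A x := by
  show eqToHom (eqS A rfl) ≫ (if h : m = m then
      eqToHom (eqS A h).symm ≫ sp A x ≫ eqToHom (congrArg T.X h.symm) else 0) = sp A x
  rw [dif_pos rfl]
  simp

/-- The cochain map `D^n ⟶ T` determined by an element `z` in degree `n`. -/
noncomputable def Dcx.desc (n : ℤ) (T : CochainComplex (ModuleCat A) ℤ)
    (z : T.X n) : Dcx A n ⟶ T where
  f k := if h : k = n then
      eqToHom (eqD A (Or.inl h)).symm ≫ sp A z ≫ eqToHom (congrArg T.X h.symm)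
    else if h' : k = n + 1 then
      eqToHom (eqD A (Or.inr h')).symm ≫ sp A (T.d n (n + 1) z) ≫
        eqToHom (congrArg T.X h'.symm)
    else 0
  comm' i j hij := by
    obtain rfl : j = i + 1 := (show i + 1 = j from hij).symm
    dsimp only
    rw [Dcx_d_eq]
    by_cases h : i = n
    · subst h
      rw [dif_pos rfl, dif_pos (⟨rfl, rfl⟩ : i = i ∧ i + 1 = i + 1),
        dif_neg (show ¬ i + 1 = i by omega), dif_pos rfl]
      simp only [eqToHom_refl, Category.comp_id, Category.id_comp, Category.assoc,
        eqToHom_trans_assoc]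
      rw [sp_comp]
    · by_cases h' : i = n + 1
      · subst h'
        rw [dif_neg h, dif_pos rfl, dif_neg (show ¬ (n + 1 = n ∧ n + 1 + 1 = n + 1) by omega),
          dif_neg (show ¬ n + 1 + 1 = n by omega), dif_neg (show ¬ n + 1 + 1 = n + 1 by omega)]
        try simp only [eqToHom_refl, Category.comp_id, Category.id_comp, Category.assoc,
          zero_comp, comp_zero]
        rw [sp_comp]
        have hz : T.d (n + 1) (n + 1 + 1) (T.d n (n + 1) z) = 0 := by
          have h0 := ConcreteCategory.congr_hom (T.d_comp_d n (n + 1) (n + 1 + 1)) z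
          simpa only [ConcreteCategory.comp_apply, ModuleCat.hom_zero, LinearMap.zero_apply] using h0
        rw [hz, sp_zero, comp_zero]
      · rw [dif_neg h, dif_neg h', zero_comp,
          dif_neg (show ¬ (i = n ∧ i + 1 = n + 1) by tauto), zero_comp]

lemma Dcx.desc_f_self (n : ℤ) (T : CochainComplex (ModuleCat A) ℤ) (z : T.X n) :
    eqToHom (eqD A (Or.inl rfl)) ≫ (Dcx.desc A n T z).f n = sp A z := by
  show eqToHom (eqD A (Or.inl rfl)) ≫ (if h : n = n then
      eqToHom (eqD A (Or.inl h)).symm ≫ sp A z ≫ eqToHom (congrArg T.X h.symm)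
    else if h' : n = n + 1 then
      eqToHom (eqD A (Or.inr h')).symm ≫ sp A (T.d n (n + 1) z) ≫
        eqToHom (congrArg T.X h'.symm)
    else 0) = sp A z
  rw [dif_pos rfl]
  simp

lemma Dcx.desc_f_succ (n : ℤ) (T : CochainComplex (ModuleCat A) ℤ) (z : T.X n) :
    eqToHom (eqD A (Or.inr rfl)) ≫ (Dcx.desc A n T z).f (n + 1) = sp A (T.d n (n + 1) z) := by
  show eqToHom (eqD A (Or.inr rfl)) ≫ (if h : n + 1 = n then
      eqToHom (eqD A (Or.inl h)).symm ≫ sp A z ≫ eqToHom (congrArg T.X h.symm)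
    else if h' : n + 1 = n + 1 then
      eqToHom (eqD A (Or.inr h')).symm ≫ sp A (T.d n (n + 1) z) ≫
        eqToHom (congrArg T.X h'.symm)
    else 0) = sp A (T.d n (n + 1) z)
  rw [dif_neg (show ¬ n + 1 = n by omega), dif_pos rfl]
  simp

end SD

section Lift

variable (A : Type) [Ring A]

lemma hasLift_iff {X Y : CochainComplex (ModuleCat A) ℤ} (p : X ⟶ Y) (n : ℤ) :
    HasLiftingProperty (iotaMap A n) p ↔
      ∀ (x : X.X (n + 1)) (y : Y.X n), (∀ k, X.d (n + 1) k x = 0) →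
        p.f (n + 1) x = Y.d n (n + 1) y →
        ∃ z : X.X n, X.d n (n + 1) z = x ∧ p.f n z = y := by
  constructor
  · intro hlp x y hx hy
    set f : Scx A (n + 1) ⟶ X := Scx.desc A (n + 1) X x hx with hfdef
    set g : Dcx A n ⟶ Y := Dcx.desc A n Y y with hgdef
    have hsq : f ≫ p = iotaMap A n ≫ g := by
      apply HomologicalComplex.hom_ext
      intro k
      rw [HomologicalComplex.comp_f, HomologicalComplex.comp_f]
      by_cases hk : k = n + 1
      · subst hk
        rw [← cancel_epi (eqToHom (eqS A (rfl : (n + 1 : ℤ) = n + 1)))]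
        rw [← Category.assoc, Scx.desc_f, sp_comp, hy]
        rw [iotaMap_f_eq, dif_pos rfl, eqToHom_trans_assoc]
        exact (Dcx.desc_f_succ A n Y y).symm
      · exact punit_hom_ext A (ScxX_punit A hk) _ _
    have sq : CommSq f (iotaMap A n) p g := ⟨hsq⟩
    obtain ⟨l, hl1, hl2⟩ := (hlp.sq_hasLift sq).exists_lift.some
    refine ⟨l.f n (eqToHom (eqD A (Or.inl rfl)) (oneA A)), ?_, ?_⟩
    · have c1 : eqToHom (eqD A (Or.inl (rfl : n = n))) ≫ l.f n ≫ X.d n (n + 1) =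
          eqToHom (eqD A (Or.inr (rfl : (n + 1 : ℤ) = n + 1))) ≫ l.f (n + 1) := by
        rw [l.comm n (n + 1), Dcx_d_eq, dif_pos (⟨rfl, rfl⟩ : n = n ∧ n + 1 = n + 1),
          eqToHom_trans_assoc]
      have c2 : eqToHom (eqD A (Or.inr (rfl : (n + 1 : ℤ) = n + 1))) ≫ l.f (n + 1) =
          sp A x := by
        have hcomp := congrArg (fun q => HomologicalComplex.Hom.f q (n + 1)) hl1
        simp only [HomologicalComplex.comp_f] at hcomp
        calc eqToHom (eqD A (Or.inr (rfl : (n + 1 : ℤ) = n + 1))) ≫ l.f (n + 1)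
            = eqToHom (eqS A (rfl : (n + 1 : ℤ) = n + 1)) ≫
                (iotaMap A n).f (n + 1) ≫ l.f (n + 1) := by
              rw [iotaMap_f_eq, dif_pos rfl, eqToHom_trans_assoc]
          _ = eqToHom (eqS A (rfl : (n + 1 : ℤ) = n + 1)) ≫ f.f (n + 1) := by rw [hcomp]
          _ = sp A x := Scx.desc_f A (n + 1) X x hx
      have hc := ConcreteCategory.congr_hom (c1.trans c2) (oneA A)
      rw [sp_one] at hc
      simpa only [ConcreteCategory.comp_apply, sp_one] using hc
    · have c3 : eqToHom (eqD A (Or.inl (rfl : n = n))) ≫ l.f n ≫ p.f n = sp A y := by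
        have hcomp := congrArg (fun q => HomologicalComplex.Hom.f q n) hl2
        simp only [HomologicalComplex.comp_f] at hcomp
        rw [hcomp]
        exact Dcx.desc_f_self A n Y y
      have hc := ConcreteCategory.congr_hom c3 (oneA A)
      rw [sp_one] at hc
      simpa only [ConcreteCategory.comp_apply, sp_one] using hc
  · intro hL
    constructor
    intro f g sq
    set x := f.f (n + 1) (eqToHom (eqS A (rfl : (n + 1 : ℤ) = n + 1)) (oneA A)) with hxdef
    have hfx : eqToHom (eqS A (rfl : (n + 1 : ℤ) = n + 1)) ≫ f.f (n + 1) = sp A x := by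
      apply sp_ext
      rw [sp_one]
      rfl
    have hx : ∀ k, X.d (n + 1) k x = 0 := by
      apply cocycle_all
      have hc := f.comm (n + 1) (n + 1 + 1)
      rw [Scx_d_eq, zero_comp] at hc
      have := ConcreteCategory.congr_hom hc (eqToHom (eqS A (rfl : (n + 1 : ℤ) = n + 1)) (oneA A))
      simpa only [ConcreteCategory.comp_apply, ModuleCat.hom_zero, LinearMap.zero_apply] using this
    set y := g.f n (eqToHom (eqD A (Or.inl (rfl : n = n))) (oneA A)) with hydef
    have hgy : eqToHom (eqD A (Or.inl (rfl : n = n))) ≫ g.f n = sp A y := by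
      apply sp_ext
      rw [sp_one]
      rfl
    have hg1 : eqToHom (eqD A (Or.inr (rfl : (n + 1 : ℤ) = n + 1))) ≫ g.f (n + 1) =
        sp A (Y.d n (n + 1) y) := by
      calc eqToHom (eqD A (Or.inr (rfl : (n + 1 : ℤ) = n + 1))) ≫ g.f (n + 1)
          = eqToHom (eqD A (Or.inl (rfl : n = n))) ≫ (Dcx A n).d n (n + 1) ≫ g.f (n + 1) := by
            rw [Dcx_d_eq, dif_pos (⟨rfl, rfl⟩ : n = n ∧ n + 1 = n + 1), eqToHom_trans_assoc]
        _ = eqToHom (eqD A (Or.inl (rfl : n = n))) ≫ g.f n ≫ Y.d n (n + 1) := by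
            rw [g.comm n (n + 1)]
        _ = sp A y ≫ Y.d n (n + 1) := by rw [← Category.assoc, hgy]
        _ = sp A (Y.d n (n + 1) y) := sp_comp A _ _
    have hyd : p.f (n + 1) x = Y.d n (n + 1) y := by
      apply sp_inj A
      have hw := congrArg (fun q => HomologicalComplex.Hom.f q (n + 1)) sq.w
      simp only [HomologicalComplex.comp_f] at hw
      calc sp A (p.f (n + 1) x) = (eqToHom (eqS A (rfl : (n + 1 : ℤ) = n + 1)) ≫
              f.f (n + 1)) ≫ p.f (n + 1) := by rw [hfx, sp_comp]
        _ = eqToHom (eqS A (rfl : (n + 1 : ℤ) = n + 1)) ≫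
              (iotaMap A n).f (n + 1) ≫ g.f (n + 1) := by rw [Category.assoc, hw]
        _ = eqToHom (eqD A (Or.inr (rfl : (n + 1 : ℤ) = n + 1))) ≫ g.f (n + 1) := by
              rw [iotaMap_f_eq, dif_pos rfl, eqToHom_trans_assoc]
        _ = sp A (Y.d n (n + 1) y) := hg1
    obtain ⟨z, hz1, hz2⟩ := hL x y hx hyd
    constructor
    refine ⟨⟨Dcx.desc A n X z, ?_, ?_⟩⟩
    · apply HomologicalComplex.hom_ext
      intro k
      rw [HomologicalComplex.comp_f]
      by_cases hk : k = n + 1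
      · subst hk
        rw [← cancel_epi (eqToHom (eqS A (rfl : (n + 1 : ℤ) = n + 1)))]
        rw [hfx, iotaMap_f_eq, dif_pos rfl, eqToHom_trans_assoc, Dcx.desc_f_succ, hz1]
      · exact punit_hom_ext A (ScxX_punit A hk) _ _
    · apply HomologicalComplex.hom_ext
      intro k
      rw [HomologicalComplex.comp_f]
      by_cases hk : k = n
      · subst hk
        rw [← cancel_epi (eqToHom (eqD A (Or.inl (rfl : k = k))))]
        rw [hgy, ← Category.assoc, Dcx.desc_f_self, sp_comp, hz2]
      · by_cases hk' : k = n + 1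
        · subst hk'
          rw [← cancel_epi (eqToHom (eqD A (Or.inr (rfl : (n + 1 : ℤ) = n + 1))))]
          rw [hg1, ← Category.assoc, Dcx.desc_f_succ, sp_comp, hz1, hyd]
        · exact punit_hom_ext A (DcxX_punit A (by tauto)) _ _

end Lift

/-- A cochain map `p : X → Y` of cochain complexes of `A`-modules has the right lifting
property with respect to `ι_n : S^{n+1} → D^n` for every `n ∈ ℤ` if and only if `p` is a
quasi-isomorphism which is surjective in every degree. -/
theorem rlp_wrt_sphere_disc_inclusions_iff_trivial_fibration
    (K : Type) [Field K] [Algebra K A] [FiniteDimensional K A]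
    {X Y : CochainComplex (ModuleCat A) ℤ} (p : X ⟶ Y) :
    (∀ n : ℤ, HasLiftingProperty (iotaMap A n) p) ↔
      (QuasiIso p ∧ ∀ n : ℤ, Function.Surjective (p.f n)) := by
  constructor
  · intro hlp
    have hL : ∀ m : ℤ, ∀ (x : X.X (m + 1)) (y : Y.X m), (∀ k, X.d (m + 1) k x = 0) →
        p.f (m + 1) x = Y.d m (m + 1) y →
        ∃ z : X.X m, X.d m (m + 1) z = x ∧ p.f m z = y :=
      fun m => (hasLift_iff A p m).1 (hlp m)
    have hL' : ∀ (j m : ℤ), m = j + 1 → ∀ (x : X.X m) (y : Y.X j), (∀ k, X.d m k x = 0) →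
        p.f m x = Y.d j m y → ∃ z : X.X j, X.d j m z = x ∧ p.f j z = y := by
      rintro j m rfl
      exact hL j
    have hsurj : ∀ m : ℤ, Function.Surjective (p.f m) := by
      intro m y
      obtain ⟨z1, hz1d, hz1p⟩ := hL (m + 1) 0 (Y.d m (m + 1) y) (fun k => map_zero _)
        (by
          rw [map_zero]
          symm
          have h0 := ConcreteCategory.congr_hom (Y.d_comp_d m (m + 1) (m + 1 + 1)) y
          simpa only [ConcreteCategory.comp_apply, ModuleCat.hom_zero, LinearMap.zero_apply] using h0)
      obtain ⟨z, _, hzp⟩ := hL m z1 y (cocycle_all A hz1d) hz1p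
      exact ⟨z, hzp⟩
    have hq : ∀ m : ℤ, QuasiIsoAt p m := by
      intro m
      rw [quasiIsoAt_iff_elem]
      constructor
      · intro x hx j hj ht
        subst hj
        obtain ⟨t, ht⟩ := ht
        obtain ⟨z, hzd, _⟩ := hL' (m - 1) m (by omega) x t hx ht
        exact ⟨z, hzd⟩
      · intro y hy j hj
        subst hj
        obtain ⟨z, hzd, hzp⟩ := hL' m (m + 1) rfl 0 y (fun k => map_zero _)
          (by rw [map_zero]; exact (hy (m + 1)).symm)
        exact ⟨z, 0, cocycle_all A hzd, by rw [map_zero, add_zero, hzp]⟩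
    exact ⟨⟨hq⟩, hsurj⟩
  · rintro ⟨hq, hs⟩ n
    rw [hasLift_iff]
    intro x y hx hy
    obtain ⟨hinj1, _⟩ := (quasiIsoAt_iff_elem A p (n + 1)).1 (hq.quasiIsoAt (n + 1))
    obtain ⟨_, hsurj0⟩ := (quasiIsoAt_iff_elem A p n).1 (hq.quasiIsoAt n)
    obtain ⟨w, hw⟩ := hinj1 x hx n (by omega) ⟨y, hy⟩
    have hu : Y.d n (n + 1) (p.f n w - y) = 0 := by
      rw [map_sub]
      have hc := ConcreteCategory.congr_hom (p.comm n (n + 1)) w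
      simp only [ConcreteCategory.comp_apply] at hc
      rw [hc, hw, hy, sub_self]
    obtain ⟨x₀, t, hx₀, ht⟩ := hsurj0 (p.f n w - y) (cocycle_all A hu) (n - 1) rfl
    obtain ⟨s, hps⟩ := hs (n - 1) t
    refine ⟨w - (x₀ - X.d (n - 1) n s), ?_, ?_⟩
    · rw [map_sub, map_sub, hw, hx₀ (n + 1)]
      have hdd : X.d n (n + 1) (X.d (n - 1) n s) = 0 := by
        have h0 := ConcreteCategory.congr_hom (X.d_comp_d (n - 1) n (n + 1)) s
        simpa only [ConcreteCategory.comp_apply, ModuleCat.hom_zero, LinearMap.zero_apply] using h0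
      rw [hdd]
      abel
    · rw [map_sub, map_sub, ht]
      have hc := ConcreteCategory.congr_hom (p.comm (n - 1) n) s
      simp only [ConcreteCategory.comp_apply] at hc
      rw [← hc, hps]
      abel
end

section
/- Let K be a field and A a finite-dimensional K-algebra. Let X be a cochain complex of A-modules indexed by ℤ which is bounded above (there exists N ∈ ℤ with X^n = 0 for all n > N) and such that X^n is a projective A-module for every n ∈ ℤ. Then the unique map 0 → X from the zero complex has the left lifting property with respect to every cochain map that is both a quasi-isomorphism and surjective in every degree; i.e. X is cofibrant in the projective model structure. -/
open CategoryTheory CategoryTheory.Limits ZeroObject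


lemma pi_eq_zero_iff {R : Type} [Ring R] (S : ShortComplex (ModuleCat R)) (x : S.cycles) :
    S.homologyπ x = 0 ↔ ∃ w, S.f w = S.iCycles x := by
  have h2 : S.moduleCatHomologyIso.hom (S.homologyπ x)
      = S.moduleCatLeftHomologyData.π (S.moduleCatCyclesIso.hom x) := S.π_moduleCatCyclesIso_hom_apply x
  have hsub : ∀ y : S.cycles, (LinearMap.ker S.g.hom).subtype (S.moduleCatCyclesIso.hom y)
      = S.iCycles y := fun y => S.moduleCatCyclesIso_hom_i_apply y
  have hmkQ : ∀ z : LinearMap.ker S.g.hom, S.moduleCatLeftHomologyData.π z = 0 ↔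
      z ∈ LinearMap.range S.moduleCatToCycles := by
    intro z
    show (LinearMap.range S.moduleCatToCycles).mkQ z = 0 ↔ _
    rw [Submodule.mkQ_apply, Submodule.Quotient.mk_eq_zero]
  have hi : Function.Injective S.moduleCatHomologyIso.hom :=
    (ModuleCat.mono_iff_injective _).1 inferInstance
  constructor
  · intro h
    rw [h, map_zero] at h2
    obtain ⟨w, hw⟩ := (hmkQ _).1 h2.symm
    refine ⟨w, ?_⟩
    have := congrArg (LinearMap.ker S.g.hom).subtype hw
    rw [hsub x] at this
    exact this
  · rintro ⟨w, hw⟩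
    apply hi
    rw [h2, map_zero]
    refine (hmkQ (S.moduleCatCyclesIso.hom x)).2 ?_
    refine ⟨w, Subtype.ext ?_⟩
    show S.f w = (LinearMap.ker S.g.hom).subtype (S.moduleCatCyclesIso.hom x)
    rw [hsub x]; exact hw

-- cycle constructor
noncomputable def cycMk {R : Type} [Ring R] (S : ShortComplex (ModuleCat R)) (x : S.X₂)
    (hx : S.g x = 0) : S.cycles := S.moduleCatCyclesIso.inv ⟨x, hx⟩

lemma cycMk_i {R : Type} [Ring R] (S : ShortComplex (ModuleCat R)) (x : S.X₂)
    (hx : S.g x = 0) : S.iCycles (cycMk S x hx) = x :=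
  S.moduleCatCyclesIso_inv_iCycles_apply ⟨x, hx⟩

lemma lemA {R : Type} [Ring R] {S₁ S₂ : ShortComplex (ModuleCat R)} (φ : S₁ ⟶ S₂)
    [IsIso (ShortComplex.homologyMap φ)] (z : S₁.X₂) (hz : S₁.g z = 0)
    (hv : ∃ v, S₂.f v = φ.τ₂ z) : ∃ w, S₁.f w = z := by
  have hinj : Function.Injective (ShortComplex.homologyMap φ) :=
    (ModuleCat.mono_iff_injective _).1 inferInstance
  have hnat : ∀ c : S₁.cycles, ShortComplex.homologyMap φ (S₁.homologyπ c)
      = S₂.homologyπ (ShortComplex.cyclesMap φ c) := by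
    intro c
    have := ShortComplex.homologyπ_naturality φ
    exact (ConcreteCategory.congr_hom this c).symm ▸ rfl
  have hcyc : ∀ c : S₁.cycles, S₂.iCycles (ShortComplex.cyclesMap φ c) = φ.τ₂ (S₁.iCycles c) :=
    fun c => ConcreteCategory.congr_hom (ShortComplex.cyclesMap_i φ) c
  set c := cycMk S₁ z hz with hc
  have h0 : S₂.homologyπ (ShortComplex.cyclesMap φ c) = 0 := by
    rw [pi_eq_zero_iff]
    obtain ⟨v, hv⟩ := hv
    exact ⟨v, by rw [hcyc, cycMk_i]; exact hv⟩
  have h1 : S₁.homologyπ c = 0 := by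
    apply hinj
    rw [hnat, h0, map_zero]
  obtain ⟨w, hw⟩ := (pi_eq_zero_iff S₁ c).1 h1
  exact ⟨w, by rwa [cycMk_i] at hw⟩

lemma lemB {R : Type} [Ring R] {S₁ S₂ : ShortComplex (ModuleCat R)} (φ : S₁ ⟶ S₂)
    [IsIso (ShortComplex.homologyMap φ)] (q : S₂.X₂) (hq : S₂.g q = 0) :
    ∃ (u : S₁.X₂) (v : S₂.X₁), S₁.g u = 0 ∧ φ.τ₂ u = q + S₂.f v := by
  have hsurjH : Function.Surjective (ShortComplex.homologyMap φ) :=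
    (ModuleCat.epi_iff_surjective _).1 inferInstance
  have hsurjπ : Function.Surjective (S₁.homologyπ) :=
    (ModuleCat.epi_iff_surjective _).1 inferInstance
  have hnat : ∀ c : S₁.cycles, ShortComplex.homologyMap φ (S₁.homologyπ c)
      = S₂.homologyπ (ShortComplex.cyclesMap φ c) := by
    intro c
    have := ShortComplex.homologyπ_naturality φ
    exact (ConcreteCategory.congr_hom this c).symm ▸ rfl
  have hcyc : ∀ c : S₁.cycles, S₂.iCycles (ShortComplex.cyclesMap φ c) = φ.τ₂ (S₁.iCycles c) :=
    fun c => ConcreteCategory.congr_hom (ShortComplex.cyclesMap_i φ) c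
  set cq := cycMk S₂ q hq with hcq
  obtain ⟨h₁, hh₁⟩ := hsurjH (S₂.homologyπ cq)
  obtain ⟨c₁, hc₁⟩ := hsurjπ h₁
  have h2 : S₂.homologyπ (ShortComplex.cyclesMap φ c₁ - cq) = 0 := by
    rw [map_sub, ← hnat, hc₁, hh₁, sub_self]
  obtain ⟨v, hv⟩ := (pi_eq_zero_iff S₂ _).1 h2
  refine ⟨S₁.iCycles c₁, v, ?_, ?_⟩
  · exact ConcreteCategory.congr_hom S₁.iCycles_g (c₁)
  · rw [map_sub, hcyc, cycMk_i] at hv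
    rw [hv]
    abel


section Key
variable {A : Type} [Ring A] {P Q : CochainComplex (ModuleCat A) ℤ} (p : P ⟶ Q)

lemma scmap_iso (hq : QuasiIso p) (i j k : ℤ) (hi : j = i + 1) (hk : k = j + 1) :
    IsIso (ShortComplex.homologyMap
      ((HomologicalComplex.shortComplexFunctor' (ModuleCat A) (ComplexShape.up ℤ) i j k).map p)) := by
  have h1 : (ComplexShape.up ℤ).prev j = i := by
    rw [CochainComplex.prev]; omega
  have h2 : (ComplexShape.up ℤ).next j = k := by
    rw [CochainComplex.next]; omega
  have := hq.quasiIsoAt j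
  rw [quasiIsoAt_iff' p i j k h1 h2] at this
  exact this.1

lemma keyexists (hq : QuasiIso p) (hsurj : ∀ n : ℤ, Function.Surjective (p.f n))
    (n m k : ℤ) (hm : m = n + 1) (hk : k = m + 1)
    (q : Q.X n) (z : P.X m) (hz : P.d m k z = 0)
    (hpz : p.f m z = Q.d n m q) :
    ∃ x : P.X n, p.f n x = q ∧ P.d n m x = z := by
  subst hm hk
  have hiso1 := scmap_iso p hq n (n+1) (n+1+1) rfl rfl
  obtain ⟨w, hw⟩ : ∃ w : P.X n, P.d n (n+1) w = z := lemA
    ((HomologicalComplex.shortComplexFunctor' (ModuleCat A) (ComplexShape.up ℤ) n (n+1) (n+1+1)).map p)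
    z hz ⟨q, hpz.symm⟩
  dsimp [HomologicalComplex.shortComplexFunctor', HomologicalComplex.sc'] at w hw
  -- w : P.X n, P.d n (n+1) w = z
  have pcomm : ∀ (i j : ℤ) (x : P.X i), p.f j (P.d i j x) = Q.d i j (p.f i x) := by
    intro i j x
    exact (ConcreteCategory.congr_hom (p.comm i j) x).symm
  have hc : Q.d n (n + 1) (q - p.f n w) = 0 := by
    rw [map_sub, ← hpz, ← hw, pcomm, sub_self]
  have hiso2 := scmap_iso p hq (n-1) n (n+1) (by omega) rfl
  obtain ⟨u, v, hu1, hu2⟩ : ∃ (u : P.X n) (v : Q.X (n-1)), P.d n (n+1) u = 0 ∧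
      p.f n u = (q - p.f n w) + Q.d (n-1) n v := lemB
    ((HomologicalComplex.shortComplexFunctor' (ModuleCat A) (ComplexShape.up ℤ) (n-1) n (n+1)).map p)
    (q - p.f n w) hc
  dsimp [HomologicalComplex.shortComplexFunctor', HomologicalComplex.sc'] at u v hu1 hu2
  obtain ⟨t, ht⟩ := hsurj (n-1) v
  refine ⟨w + u - P.d (n-1) n t, ?_, ?_⟩
  · have hdd : p.f n (P.d (n-1) n t) = Q.d (n-1) n v := by rw [pcomm, ht]
    rw [map_sub, map_add, hu2, hdd]
    abel
  · have h1 : P.d n (n+1) (P.d (n-1) n t) = 0 := by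
      exact ConcreteCategory.congr_hom (P.d_comp_d (n-1) n (n+1)) t
    rw [map_sub, map_add, hw, hu1, h1]
    abel
end Key

section Obtain
variable {A : Type} [Ring A] {P Q : CochainComplex (ModuleCat A) ℤ} (p : P ⟶ Q)

lemma obtainLift (hq : QuasiIso p) (hsurj : ∀ n : ℤ, Function.Surjective (p.f n))
    (M : ModuleCat A) [Projective M] (n m k : ℤ) (hm : m = n + 1) (hk : k = m + 1)
    (φ : M ⟶ Q.X n) (ζ : M ⟶ P.X m)
    (hζd : ζ ≫ P.d m k = 0) (hζp : ζ ≫ p.f m = φ ≫ Q.d n m) :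
    ∃ h : M ⟶ P.X n, h ≫ p.f n = φ ∧ h ≫ P.d n m = ζ := by
  classical
  set S : Submodule A (Q.X n × P.X m) :=
    { carrier := {s | P.d m k s.2 = 0 ∧ p.f m s.2 = Q.d n m s.1}
      add_mem' := by
        rintro a b ⟨ha1, ha2⟩ ⟨hb1, hb2⟩
        constructor <;> simp_all [map_add]
      zero_mem' := by simp
      smul_mem' := by
        rintro c a ⟨ha1, ha2⟩
        constructor <;> simp_all [map_smul] } with hS
  let e : P.X n →ₗ[A] S :=
    LinearMap.codRestrict S (LinearMap.prod (p.f n).hom (P.d n m).hom) (by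
      intro x
      refine ⟨ConcreteCategory.congr_hom (P.d_comp_d n m k) x, ?_⟩
      exact (ConcreteCategory.congr_hom (p.comm n m) x).symm)
  have esurj : Function.Surjective e := by
    rintro ⟨⟨q, z⟩, hz, hpz⟩
    obtain ⟨x, hx1, hx2⟩ := keyexists p hq hsurj n m k hm hk q z hz hpz
    exact ⟨x, Subtype.ext (Prod.ext hx1 hx2)⟩
  let τ : M →ₗ[A] S :=
    LinearMap.codRestrict S (LinearMap.prod φ.hom ζ.hom) (by
      intro m
      exact ⟨ConcreteCategory.congr_hom hζd m, ConcreteCategory.congr_hom hζp m⟩)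
  let eHom : P.X n ⟶ ModuleCat.of A S := ModuleCat.ofHom e
  haveI : Epi eHom := (ModuleCat.epi_iff_surjective _).2 esurj
  let h : M ⟶ P.X n := Projective.factorThru (ModuleCat.ofHom τ) eHom
  have hfac : h ≫ eHom = ModuleCat.ofHom τ := Projective.factorThru_comp _ _
  refine ⟨h, ?_, ?_⟩
  · ext m
    have := congrArg Subtype.val (ConcreteCategory.congr_hom hfac m)
    exact congrArg Prod.fst this
  · ext m
    have := congrArg Subtype.val (ConcreteCategory.congr_hom hfac m)
    exact congrArg Prod.snd this
end Obtain

section LiftConstr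
variable {A : Type} [Ring A] {P Q X : CochainComplex (ModuleCat A) ℤ}

noncomputable def liftAux (p : P ⟶ Q) (g : X ⟶ Q) (N : ℤ)
    (hq : QuasiIso p) (hsurj : ∀ n : ℤ, Function.Surjective (p.f n))
    (hN : ∀ n : ℤ, n > N → IsZero (X.X n)) (hproj : ∀ n : ℤ, Projective (X.X n)) :
    (n : ℤ) → Σ' (h : X.X n ⟶ P.X n) (h' : X.X (n+1) ⟶ P.X (n+1)),
      h ≫ p.f n = g.f n ∧ h ≫ P.d n (n+1) = X.d n (n+1) ≫ h' := fun n =>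
  if hn : n > N then
    ⟨0, 0, by rw [zero_comp]; exact (hN n hn).eq_of_src 0 (g.f n),
      by rw [zero_comp, (hN n hn).eq_of_src (X.d n (n+1)) 0, zero_comp]⟩
  else
    have hdec : (N + 1 - (n+1)).toNat < (N + 1 - n).toNat := by omega
    let prev := liftAux p g N hq hsurj hN hproj (n+1)
    have hζd : (X.d n (n+1) ≫ prev.1) ≫ P.d (n+1) (n+1+1) = 0 := by
      rw [Category.assoc, prev.2.2.2, ← Category.assoc, X.d_comp_d, zero_comp]
    have hζp : (X.d n (n+1) ≫ prev.1) ≫ p.f (n+1) = g.f n ≫ Q.d n (n+1) := by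
      rw [Category.assoc, prev.2.2.1, ← g.comm n (n+1)]
    haveI := hproj n
    let spec := obtainLift p hq hsurj (X.X n) n (n+1) (n+1+1) rfl rfl (g.f n)
      (X.d n (n+1) ≫ prev.1) hζd hζp
    ⟨spec.choose, prev.1, spec.choose_spec.1, spec.choose_spec.2⟩
termination_by n => (N + 1 - n).toNat

lemma liftAux_succ (p : P ⟶ Q) (g : X ⟶ Q) (N : ℤ)
    (hq : QuasiIso p) (hsurj : ∀ n : ℤ, Function.Surjective (p.f n))
    (hN : ∀ n : ℤ, n > N → IsZero (X.X n)) (hproj : ∀ n : ℤ, Projective (X.X n)) (n : ℤ) :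
    (liftAux p g N hq hsurj hN hproj n).2.1 = (liftAux p g N hq hsurj hN hproj (n+1)).1 := by
  by_cases hn : n > N
  · rw [liftAux, dif_pos hn, liftAux, dif_pos (by omega : n + 1 > N)]
  · conv_lhs => rw [liftAux, dif_neg hn]
end LiftConstr


/-- If a cochain complex `X` of modules over a finite-dimensional algebra `A` is
bounded above and each term `X^n` is a projective `A`-module, then `X` is cofibrant
in the projective model structure: the unique map `0 → X` has the left lifting
property with respect to every degreewise surjective quasi-isomorphism. -/
theorem cofibrant_of_bounded_above_degreewise_projective
    (K : Type) [Field K] (A : Type) [Ring A] [Algebra K A] [FiniteDimensional K A]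
    (X : CochainComplex (ModuleCat A) ℤ)
    (hbdd : ∃ N : ℤ, ∀ n : ℤ, n > N → IsZero (X.X n))
    (hproj : ∀ n : ℤ, Projective (X.X n)) :
    ∀ ⦃P Q : CochainComplex (ModuleCat A) ℤ⦄ (p : P ⟶ Q), QuasiIso p →
      (∀ n : ℤ, Function.Surjective (p.f n)) →
      HasLiftingProperty (0 : (0 : CochainComplex (ModuleCat A) ℤ) ⟶ X) p := by
  obtain ⟨N, hN⟩ := hbdd
  intro P Q p hq hsurj
  constructor
  intro f g sq
  refine ⟨⟨{ l := { f := fun n => (liftAux p g N hq hsurj hN hproj n).1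
                    comm' := ?_ }
             fac_left := ?_
             fac_right := ?_ }⟩⟩
  · intro i j hij
    obtain rfl : j = i + 1 := hij.symm
    rw [(liftAux p g N hq hsurj hN hproj i).2.2.2, liftAux_succ]
  · exact (Limits.isZero_zero _).eq_of_src _ _
  · apply HomologicalComplex.hom_ext
    intro n
    rw [HomologicalComplex.comp_f]
    exact (liftAux p g N hq hsurj hN hproj n).2.2.1
end
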